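/- For f(x) = x² + 1 and any k ≥ 1, whenever x = cot θ (with all denominators nonzero), k · (1/f)^{(k-1)}(x) / (1/f)^{(k)}(x) = - sin(kθ) / (sin θ · sin((k+1)θ)). -/

import Mathlib

open Complex

private lemma factored (z : ℂ) : z ^ 2 + 1 = (z - I) * (z + I) := by
  linear_combination Complex.I_sq

private lemma iter_formula (n : ℕ) : ∀ z : ℂ, z ^ 2 + 1 ≠ 0 →
    iteratedDeriv n (fun z : ℂ => (z ^ 2 + 1)⁻¹) z =
      (2 * I)⁻¹ * (-1) ^ n * (Nat.factorial n : ℂ) *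
        ((z - I) ^ (-(n + 1) : ℤ) - (z + I) ^ (-(n + 1) : ℤ)) := by
  induction n with
  | zero =>
    intro z hz
    have h1 : z - I ≠ 0 := fun h => hz (by rw [factored, h, zero_mul])
    have h2 : z + I ≠ 0 := fun h => hz (by rw [factored, h, mul_zero])
    simp only [iteratedDeriv_zero, pow_zero, Nat.factorial_zero]
    simp only [Nat.cast_zero, zero_add, zpow_neg, zpow_one]
    rw [factored]
    field_simp
    ring
  | succ n ih =>
    intro z hz
    have hopen : IsOpen {w : ℂ | w ^ 2 + 1 ≠ 0} :=
      isOpen_compl_singleton.preimage (by continuity)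
    have hev : iteratedDeriv n (fun z : ℂ => (z ^ 2 + 1)⁻¹) =ᶠ[nhds z]
        fun w => (2 * I)⁻¹ * (-1) ^ n * (Nat.factorial n : ℂ) *
          ((w - I) ^ (-(n + 1) : ℤ) - (w + I) ^ (-(n + 1) : ℤ)) :=
      Filter.eventuallyEq_of_mem (hopen.mem_nhds hz) fun w hw => ih w hw
    have h1 : z - I ≠ 0 := fun h => hz (by rw [factored, h, zero_mul])
    have h2 : z + I ≠ 0 := fun h => hz (by rw [factored, h, mul_zero])
    rw [iteratedDeriv_succ, hev.deriv_eq]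
    have d1 : HasDerivAt (fun w : ℂ => (w - I) ^ (-(n + 1) : ℤ))
        ((-(n + 1) : ℤ) * (z - I) ^ ((-(n + 1) : ℤ) - 1) * 1) z :=
      by have := (hasDerivAt_zpow (-(n + 1) : ℤ) (z - I) (Or.inl h1)).comp z ((hasDerivAt_id z).sub_const I); exact this
    have d2 : HasDerivAt (fun w : ℂ => (w + I) ^ (-(n + 1) : ℤ))
        ((-(n + 1) : ℤ) * (z + I) ^ ((-(n + 1) : ℤ) - 1) * 1) z :=
      by have := (hasDerivAt_zpow (-(n + 1) : ℤ) (z + I) (Or.inl h2)).comp z ((hasDerivAt_id z).add_const I); exact this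
    have d : HasDerivAt (fun w : ℂ => (2 * I)⁻¹ * (-1) ^ n * (Nat.factorial n : ℂ) *
          ((w - I) ^ (-(n + 1) : ℤ) - (w + I) ^ (-(n + 1) : ℤ)))
        ((2 * I)⁻¹ * (-1) ^ n * (Nat.factorial n : ℂ) *
          ((-(n + 1) : ℤ) * (z - I) ^ ((-(n + 1) : ℤ) - 1) * 1 -
           (-(n + 1) : ℤ) * (z + I) ^ ((-(n + 1) : ℤ) - 1) * 1)) z :=
      (d1.sub d2).const_mul _
    rw [d.deriv]
    have e1 : ((-(n + 1) : ℤ) - 1) = (-(n + 1 + 1) : ℤ) := by ring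
    rw [e1]
    push_cast [Nat.factorial_succ]
    ring

private lemma eval_formula (n : ℕ) (θ : ℂ) (hs : Complex.sin θ ≠ 0) :
    iteratedDeriv n (fun z : ℂ => (z ^ 2 + 1)⁻¹) (Complex.cot θ) =
      (-1) ^ n * (Nat.factorial n : ℂ) * Complex.sin θ ^ (n + 1) *
        Complex.sin ((n + 1 : ℂ) * θ) := by
  have hz : Complex.cot θ ^ 2 + 1 ≠ 0 := by
    have h : Complex.cot θ ^ 2 + 1 = (Complex.sin θ)⁻¹ ^ 2 := by
      rw [Complex.cot_eq_cos_div_sin]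
      field_simp
      exact Complex.cos_sq_add_sin_sq θ
    rw [h]
    exact pow_ne_zero 2 (inv_ne_zero hs)
  rw [iter_formula n _ hz]
  have hm : Complex.cot θ - I = Complex.exp (-θ * I) / Complex.sin θ := by
    rw [Complex.cot_eq_cos_div_sin, Complex.exp_mul_I, Complex.cos_neg, Complex.sin_neg]
    field_simp
    ring
  have hp : Complex.cot θ + I = Complex.exp (θ * I) / Complex.sin θ := by
    rw [Complex.cot_eq_cos_div_sin, Complex.exp_mul_I]
    field_simp
  have key : Complex.exp ((n + 1 : ℂ) * θ * I) - Complex.exp (-((n + 1 : ℂ) * θ) * I) =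
      2 * I * Complex.sin ((n + 1 : ℂ) * θ) := by
    rw [Complex.sin]
    linear_combination (Complex.exp ((n + 1 : ℂ) * θ * I) -
      Complex.exp (-((n + 1 : ℂ) * θ) * I)) * Complex.I_sq
  have e1 : Complex.exp (-θ * I) ^ (-(n + 1) : ℤ) = Complex.exp ((n + 1 : ℂ) * θ * I) := by
    rw [← Complex.exp_int_mul]
    congr 1
    push_cast
    ring
  have e2 : Complex.exp (θ * I) ^ (-(n + 1) : ℤ) = Complex.exp (-((n + 1 : ℂ) * θ) * I) := by
    rw [← Complex.exp_int_mul]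
    congr 1
    push_cast
    ring
  have e3 : Complex.sin θ ^ (-(n + 1) : ℤ) = (Complex.sin θ ^ (n + 1))⁻¹ := by
    rw [show (-(n + 1) : ℤ) = -((n + 1 : ℕ) : ℤ) by push_cast; ring, zpow_neg, zpow_natCast]
  rw [hm, hp, div_zpow, div_zpow, e1, e2, e3, div_inv_eq_mul, div_inv_eq_mul,
    ← sub_mul, key]
  have h2I : (2 * I : ℂ) ≠ 0 := by simp [Complex.I_ne_zero]
  field_simp

theorem householder_correction_term (k : ℕ) (hk : 1 ≤ k) (θ x : ℂ)
    (hs : Complex.sin θ ≠ 0) (hs' : Complex.sin ((k + 1 : ℂ) * θ) ≠ 0)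
    (hx : x = Complex.cot θ)
    (hne : iteratedDeriv k (fun z : ℂ => (z ^ 2 + 1)⁻¹) x ≠ 0) :
    (k : ℂ) * iteratedDeriv (k - 1) (fun z : ℂ => (z ^ 2 + 1)⁻¹) x /
        iteratedDeriv k (fun z : ℂ => (z ^ 2 + 1)⁻¹) x =
      -Complex.sin ((k : ℂ) * θ) /
        (Complex.sin θ * Complex.sin ((k + 1 : ℂ) * θ)) := by
  obtain ⟨n, rfl⟩ : ∃ n, k = n + 1 := ⟨k - 1, (Nat.succ_pred_eq_of_pos hk).symm⟩
  subst hx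
  have hA := eval_formula n θ hs
  have hB := eval_formula (n + 1) θ hs
  simp only [Nat.add_sub_cancel]
  rw [hA, hB, Nat.factorial_succ]
  push_cast at hs' hB ⊢
  have hfn : (Nat.factorial n : ℂ) ≠ 0 := by
    exact_mod_cast Nat.factorial_ne_zero n
  have hn1 : ((n : ℂ) + 1) ≠ 0 := Nat.cast_add_one_ne_zero n
  have hD : ((-1 : ℂ)) ^ (n + 1) * (((n : ℂ) + 1) * (Nat.factorial n : ℂ)) *
      Complex.sin θ ^ (n + 1 + 1) * Complex.sin (((n : ℂ) + 1 + 1) * θ) ≠ 0 := by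
    exact mul_ne_zero (mul_ne_zero (mul_ne_zero (pow_ne_zero _ (by norm_num))
      (mul_ne_zero hn1 hfn)) (pow_ne_zero _ hs)) hs'
  have hD2 : Complex.sin θ * Complex.sin (((n : ℂ) + 1 + 1) * θ) ≠ 0 :=
    mul_ne_zero hs hs'
  rw [div_eq_div_iff hD hD2]
  ring
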